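/- In the ear setup, let K be a semifield and let f : diag(P) → K satisfy the T-path formula with respect to D. Then the restriction of f to diag(P₂) satisfies the T-path formula with respect to D₂. -/

import Mathlib

/-!
Common definitions: polygons with vertex set `ZMod n`, crossing of diagonals,
dissections, (weak) friezes with values in a semifield, and T-paths.
-/

/-- A *semifield* in the sense of the paper: a set `K` with a commutative, associative
addition and a multiplication making `K` a commutative group, such that multiplication
distributes over addition.  (There is no zero and no subtraction.) -/
class PaperSemifield (K : Type*) extends CommGroup K, AddCommSemigroup K where
  mul_add' : ∀ a b c : K, a * (b + c) = a * b + a * c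

/-- Position of the vertex `x` of the `n`-gon relative to the vertex `a`, going around
the polygon in the positive direction; `relPos n a x = 0` iff `x = a`. -/
def relPos (n : ℕ) (a x : ZMod n) : ℕ := (x - a).val

/-- The vertices `a, b, c, d` of the `n`-gon appear strictly in this cyclic order. -/
def CyclicallyOrdered (n : ℕ) (a b c d : ZMod n) : Prop :=
  0 < relPos n a b ∧ relPos n a b < relPos n a c ∧ relPos n a c < relPos n a d

/-- The diagonals `{a,b}` and `{c,d}` of the `n`-gon *cross*: the four vertices are
distinct and appear in the cyclic order `a, c, b, d` or `a, d, b, c`. -/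
def Crosses (n : ℕ) (a b c d : ZMod n) : Prop :=
  CyclicallyOrdered n a c b d ∨ CyclicallyOrdered n a d b c

/-- `{a, b}` is an edge of the `n`-gon, i.e. joins neighbouring vertices. -/
def IsEdge (n : ℕ) (a b : ZMod n) : Prop := b = a + 1 ∨ a = b + 1

/-- `{a, b}` is an internal diagonal of the `n`-gon. -/
def IsInternalDiag (n : ℕ) (a b : ZMod n) : Prop := a ≠ b ∧ ¬ IsEdge n a b

/-- `w'` is the successor of `w` in the induced cyclic order of the subpolygon of the
`n`-gon with vertex set `W`. -/
def NextIn (n : ℕ) (W : Set (ZMod n)) (w w' : ZMod n) : Prop :=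
  w ∈ W ∧ w' ∈ W ∧ w' ≠ w ∧ ∀ u ∈ W, relPos n w u = 0 ∨ relPos n w w' ≤ relPos n w u

/-- `D` is a dissection of the subpolygon of the `n`-gon with vertex set `W`: a set of
pairwise non-crossing diagonals of the subpolygon joining non-neighbouring vertices. -/
def IsDissectionOf (n : ℕ) (W : Set (ZMod n)) (D : Set (Sym2 (ZMod n))) : Prop :=
  (∀ a b, s(a, b) ∈ D → a ∈ W ∧ b ∈ W ∧ a ≠ b ∧ ¬ NextIn n W a b ∧ ¬ NextIn n W b a) ∧
  (∀ a b c d, s(a, b) ∈ D → s(c, d) ∈ D → ¬ Crosses n a b c d)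

/-- `D` is a dissection of the `n`-gon. -/
def IsDissection (n : ℕ) (D : Set (Sym2 (ZMod n))) : Prop :=
  IsDissectionOf n Set.univ D

/-- `f` is symmetric on pairs of vertices from `W`, i.e. represents a map defined on
unordered diagonals of the subpolygon with vertex set `W`. -/
def SymmOn (n : ℕ) {K : Type*} (W : Set (ZMod n)) (f : ZMod n → ZMod n → K) : Prop :=
  ∀ a b, a ∈ W → b ∈ W → f a b = f b a

/-- The Ptolemy relation for `f` at the crossing diagonals `{a,b}` and `{c,d}`. -/
def PtolemyRel {n : ℕ} {K : Type*} [Mul K] [Add K]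
    (f : ZMod n → ZMod n → K) (a b c d : ZMod n) : Prop :=
  f a b * f c d = f a c * f b d + f a d * f b c

/-- `f` is a weak frieze on the subpolygon with vertex set `W` with respect to `D`:
the Ptolemy relation holds whenever `{a,b}` and `{c,d}` are crossing diagonals of the
subpolygon with `{c,d} ∈ D`. -/
def IsWeakFriezeOn (n : ℕ) {K : Type*} [Mul K] [Add K] (W : Set (ZMod n))
    (D : Set (Sym2 (ZMod n))) (f : ZMod n → ZMod n → K) : Prop :=
  ∀ a b c d : ZMod n, a ∈ W → b ∈ W → c ∈ W → d ∈ W →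
    Crosses n a b c d → s(c, d) ∈ D → PtolemyRel f a b c d

/-- `f` is a weak frieze on the `n`-gon with respect to the dissection `D`. -/
def IsWeakFrieze (n : ℕ) {K : Type*} [Mul K] [Add K]
    (D : Set (Sym2 (ZMod n))) (f : ZMod n → ZMod n → K) : Prop :=
  IsWeakFriezeOn n Set.univ D f

/-- `f` is a frieze on the subpolygon with vertex set `W`: the Ptolemy relation holds
for all crossing diagonals of the subpolygon. -/
def IsFriezeOn (n : ℕ) {K : Type*} [Mul K] [Add K] (W : Set (ZMod n))
    (f : ZMod n → ZMod n → K) : Prop :=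
  ∀ a b c d : ZMod n, a ∈ W → b ∈ W → c ∈ W → d ∈ W →
    Crosses n a b c d → PtolemyRel f a b c d

/-- `f` is a frieze on the `n`-gon. -/
def IsFrieze (n : ℕ) {K : Type*} [Mul K] [Add K] (f : ZMod n → ZMod n → K) : Prop :=
  IsFriezeOn n Set.univ f

/-- The vertices of the `n`-gon realised as a regular convex `n`-gon in the Euclidean
plane. -/
noncomputable def vtx (n : ℕ) (a : ZMod n) : ℝ × ℝ :=
  (Real.cos (2 * Real.pi * (a.val : ℝ) / n), Real.sin (2 * Real.pi * (a.val : ℝ) / n))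

/-- The point with parameter `t` on the segment from `A` to `B`. -/
def segPt (A B : ℝ × ℝ) (t : ℝ) : ℝ × ℝ :=
  ((1 - t) * A.1 + t * B.1, (1 - t) * A.2 + t * B.2)

/-- In the regular realisation of the `n`-gon, the diagonal `{c,d}` crosses the diagonal
`{a,b}` at the interior point with parameter `t` along the segment from `a` to `b`. -/
def CrossesAt (n : ℕ) (a b c d : ZMod n) (t : ℝ) : Prop :=
  0 < t ∧ t < 1 ∧ ∃ s : ℝ, 0 < s ∧ s < 1 ∧
    segPt (vtx n a) (vtx n b) t = segPt (vtx n c) (vtx n d) s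

/-- `l` is a T-path from `a` to `b` with respect to `D` in the subpolygon of the `n`-gon
with vertex set `W`.  Writing `p = l.length` and `π_i = l.getD (i-1) 0` (so the paper's
`π_1, …, π_p` are the entries of `l`), the conditions are: the path starts at `a` and
ends at `b`, uses vertices of `W`; (i) the consecutive pairs are pairwise different
diagonals; (ii) no step crosses a diagonal in `D`; (iii) the steps starting at an
even position (in the paper's 1-based numbering) are diagonals in `D` which cross the
diagonal `{a,b}` at pairwise different points progressing monotonically in the
direction from `a` to `b`. -/
def IsTPathOn (n : ℕ) (W : Set (ZMod n)) (D : Set (Sym2 (ZMod n))) (a b : ZMod n)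
    (l : List (ZMod n)) : Prop :=
  2 ≤ l.length ∧
  l.getD 0 0 = a ∧
  l.getD (l.length - 1) 0 = b ∧
  (∀ i, i < l.length → l.getD i 0 ∈ W) ∧
  (∀ i, i + 1 < l.length → l.getD i 0 ≠ l.getD (i + 1) 0) ∧
  (∀ i j, i < j → j + 1 < l.length →
    s(l.getD i 0, l.getD (i + 1) 0) ≠ s(l.getD j 0, l.getD (j + 1) 0)) ∧
  (∀ i, i + 1 < l.length → ∀ c d, s(c, d) ∈ D →
    ¬ Crosses n (l.getD i 0) (l.getD (i + 1) 0) c d) ∧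
  (∀ i, Odd i → i + 1 < l.length → s(l.getD i 0, l.getD (i + 1) 0) ∈ D) ∧
  (∃ t : ℕ → ℝ,
    (∀ i, Odd i → i + 1 < l.length → CrossesAt n a b (l.getD i 0) (l.getD (i + 1) 0) (t i)) ∧
    (∀ i j, Odd i → Odd j → i < j → j + 1 < l.length → t i < t j))

/-- `l` is a T-path from `a` to `b` with respect to `D` in the `n`-gon. -/
def IsTPath (n : ℕ) (D : Set (Sym2 (ZMod n))) (a b : ZMod n) (l : List (ZMod n)) : Prop :=
  IsTPathOn n Set.univ D a b l

open Classical in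
/-- The (finite) set of all T-paths from `a` to `b` with respect to `D` in the
subpolygon with vertex set `W`.  (Any T-path has pairwise different steps, hence has
length at most `n * n + 1`, so this finite set contains all of them.) -/
noncomputable def TPathFinsetOn (n : ℕ) [NeZero n] (W : Set (ZMod n))
    (D : Set (Sym2 (ZMod n))) (a b : ZMod n) : Finset (List (ZMod n)) :=
  ((Finset.range (n * n + 2)).biUnion fun k =>
    (Finset.univ : Finset (Fin k → ZMod n)).image List.ofFn).filter (IsTPathOn n W D a b)

/-- The (finite) set of all T-paths from `a` to `b` with respect to `D` in the `n`-gon. -/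
noncomputable def TPathFinset (n : ℕ) [NeZero n] (D : Set (Sym2 (ZMod n))) (a b : ZMod n) :
    Finset (List (ZMod n)) :=
  TPathFinsetOn n Set.univ D a b

/-- The weight `f(π)` of a T-path `l`: the product of the values of `f` on the steps at
odd positions (1-based) divided by the product of the values on the steps at even
positions. -/
def pathWeight (n : ℕ) {K : Type*} [CommGroup K] (f : ZMod n → ZMod n → K)
    (l : List (ZMod n)) : K :=
  (∏ i ∈ (Finset.range (l.length - 1)).filter (fun i => Even i),
      f (l.getD i 0) (l.getD (i + 1) 0)) /
  (∏ i ∈ (Finset.range (l.length - 1)).filter (fun i => Odd i),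
      f (l.getD i 0) (l.getD (i + 1) 0))

/-- `f` satisfies the T-path formula with respect to `D` on the subpolygon with vertex
set `W`: for all vertices `a ≠ b` of the subpolygon, `f a b` is the sum of the weights
of all T-paths from `a` to `b`.  Since the semifield `K` has no zero element, the sum is
computed in `WithZero K` (the sum is in fact always a sum of a nonempty collection). -/
def SatisfiesTPathFormulaOn (n : ℕ) [NeZero n] {K : Type*} [PaperSemifield K]
    (W : Set (ZMod n)) (D : Set (Sym2 (ZMod n))) (f : ZMod n → ZMod n → K) : Prop :=
  ∀ a b : ZMod n, a ∈ W → b ∈ W → a ≠ b →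
    WithZero.coe (f a b) = ∑ l ∈ TPathFinsetOn n W D a b, WithZero.coe (pathWeight n f l)

/-- `f` satisfies the T-path formula with respect to `D` on the `n`-gon. -/
def SatisfiesTPathFormula (n : ℕ) [NeZero n] {K : Type*} [PaperSemifield K]
    (D : Set (Sym2 (ZMod n))) (f : ZMod n → ZMod n → K) : Prop :=
  SatisfiesTPathFormulaOn n Set.univ D f

/-- `W` is the vertex set of one of the subpolygons into which the pairwise non-crossing
internal diagonals `E` divide the `n`-gon: `W` has at least three vertices, consecutive
vertices of `W` are joined by an edge of the polygon or by a diagonal in `E`, and no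
diagonal in `E` cuts through `W`. -/
def IsCell (n : ℕ) (E : Set (Sym2 (ZMod n))) (W : Set (ZMod n)) : Prop :=
  3 ≤ W.ncard ∧
  (∀ w w', NextIn n W w w' → (w' = w + 1 ∨ s(w, w') ∈ E)) ∧
  (∀ c d, s(c, d) ∈ E → c ∈ W → d ∈ W → (NextIn n W c d ∨ NextIn n W d c))

section EarAux
open Real

private def dt (A B C : ℝ × ℝ) : ℝ :=
  (B.1 - A.1) * (C.2 - A.2) - (B.2 - A.2) * (C.1 - A.1)

lemma rp_spec (n : ℕ) [NeZero n] (x y : ZMod n) :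
    (x.val ≤ y.val ∧ relPos n x y = y.val - x.val) ∨
    (y.val < x.val ∧ relPos n x y = y.val + n - x.val) := by
  rcases le_or_gt x.val y.val with h | h
  · exact Or.inl ⟨h, ZMod.val_sub h⟩
  · right
    refine ⟨h, ?_⟩
    have hx := ZMod.val_lt x
    have hy := ZMod.val_lt y
    have key : y - x = ((y.val + n - x.val : ℕ) : ZMod n) := by
      have : ((y.val + n - x.val : ℕ) : ZMod n) = (y.val : ZMod n) + (n : ZMod n) - (x.val : ZMod n) := by
        have hle : x.val ≤ y.val + n := by omega
        push_cast [Nat.cast_sub hle]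
        ring
      rw [this, ZMod.natCast_val, ZMod.natCast_val, ZMod.natCast_self]
      simp [ZMod.cast_id]
    rw [relPos, key, ZMod.val_cast_of_lt (by omega)]

lemma rp_eq_zero_iff (n : ℕ) (x y : ZMod n) : relPos n x y = 0 ↔ y = x := by
  rw [relPos, ZMod.val_eq_zero, sub_eq_zero]

lemma rp_inj (n : ℕ) [NeZero n] (a : ZMod n) {x y : ZMod n} (h : relPos n a x = relPos n a y) : x = y := by
  have := ZMod.val_injective n h
  have : x - a + a = y - a + a := by rw [this]
  simpa using this

lemma noCross (n : ℕ) [NeZero n] (ζ η x y : ZMod n)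
    (hx : relPos n η x ≤ relPos n η ζ) (hy : relPos n η y ≤ relPos n η ζ) :
    ¬ Crosses n x y ζ η ∧ ¬ Crosses n x y η ζ := by
  have h1 := rp_spec n η x
  have h2 := rp_spec n η y
  have h3 := rp_spec n η ζ
  have h4 := rp_spec n x ζ
  have h5 := rp_spec n x y
  have h6 := rp_spec n x η
  have hvx := ZMod.val_lt x
  have hvy := ZMod.val_lt y
  have hvz := ZMod.val_lt ζ
  have hve := ZMod.val_lt η
  unfold Crosses CyclicallyOrdered
  omega

lemma trig_id (α s r : ℝ) :
    (cos (α + 2*s) - cos α) * (sin (α + 2*r) - sin α)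
      - (sin (α + 2*s) - sin α) * (cos (α + 2*r) - cos α)
    = 4 * sin s * sin (r - s) * sin r := by
  have h1 : sin (2*r - 2*s) = sin (α+2*r) * cos (α+2*s) - cos (α+2*r) * sin (α+2*s) := by
    rw [← sin_sub]; ring_nf
  have h2 : sin (2*s) = sin (α+2*s) * cos α - cos (α+2*s) * sin α := by
    rw [← sin_sub]; ring_nf
  have h3 : sin (2*r) = sin (α+2*r) * cos α - cos (α+2*r) * sin α := by
    rw [← sin_sub]; ring_nf
  have key : sin (2*r - 2*s) + sin (2*s) - sin (2*r) = 4 * sin s * sin (r - s) * sin r := by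
    rw [sin_sub (2*r) (2*s), sin_two_mul, sin_two_mul, cos_two_mul, cos_two_mul, sin_sub]
    linear_combination (4*sin r*cos r) * sin_sq_add_cos_sq s - (4*sin s*cos s) * sin_sq_add_cos_sq r
  linear_combination -h1 - h2 + h3 + key

lemma angle_shift (n : ℕ) [NeZero n] (a b : ZMod n) :
    ∃ k : ℤ, 2 * π * (b.val : ℝ) / n
      = (2 * π * (a.val : ℝ) / n + 2 * (π * (relPos n a b : ℝ) / n)) - k * (2 * π) := by
  have hn : (0:ℝ) < n := by exact_mod_cast Nat.pos_of_ne_zero (NeZero.ne n)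
  set u := relPos n a b with hu
  have hb : b = a + (u : ZMod n) := by
    rw [hu, relPos, ZMod.natCast_val, ZMod.cast_id]; ring
  have hulesn : (u : ZMod n).val = u := ZMod.val_cast_of_lt (ZMod.val_lt _)
  have hval : b.val = (a.val + u) % n := by rw [hb, ZMod.val_add, hulesn]
  have hmd := Nat.mod_add_div (a.val + u) n
  set K : ℕ := (a.val + u) / n with hK
  refine ⟨(K : ℤ), ?_⟩
  have hmod : b.val = a.val + u - n * K := by omega
  have hle : n * K ≤ a.val + u := by omega
  have hcast : (b.val : ℝ) = (a.val : ℝ) + u - (n:ℝ) * (K:ℝ) := by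
    rw [hmod]; push_cast [hle]; ring
  rw [hcast]
  push_cast
  field_simp

lemma dt_vtx (n : ℕ) [NeZero n] (a b c : ZMod n) :
    dt (vtx n a) (vtx n b) (vtx n c)
      = 4 * sin (π * (relPos n a b : ℝ) / n)
          * sin (π * (relPos n a c : ℝ) / n - π * (relPos n a b : ℝ) / n)
          * sin (π * (relPos n a c : ℝ) / n) := by
  obtain ⟨k, hk⟩ := angle_shift n a b
  obtain ⟨k', hk'⟩ := angle_shift n a c
  have hcb : cos (2 * π * (b.val : ℝ) / n)
      = cos (2 * π * (a.val : ℝ) / n + 2 * (π * (relPos n a b : ℝ) / n)) := by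
    rw [hk, cos_sub_int_mul_two_pi]
  have hsb : sin (2 * π * (b.val : ℝ) / n)
      = sin (2 * π * (a.val : ℝ) / n + 2 * (π * (relPos n a b : ℝ) / n)) := by
    rw [hk, sin_sub_int_mul_two_pi]
  have hcc : cos (2 * π * (c.val : ℝ) / n)
      = cos (2 * π * (a.val : ℝ) / n + 2 * (π * (relPos n a c : ℝ) / n)) := by
    rw [hk', cos_sub_int_mul_two_pi]
  have hsc : sin (2 * π * (c.val : ℝ) / n)
      = sin (2 * π * (a.val : ℝ) / n + 2 * (π * (relPos n a c : ℝ) / n)) := by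
    rw [hk', sin_sub_int_mul_two_pi]
  have := trig_id (2 * π * (a.val : ℝ) / n) (π * (relPos n a b : ℝ) / n) (π * (relPos n a c : ℝ) / n)
  simp only [dt, vtx, hcb, hsb, hcc, hsc]
  linear_combination this

section
variable (n : ℕ) [NeZero n]

lemma npos : (0:ℝ) < n := by exact_mod_cast Nat.pos_of_ne_zero (NeZero.ne n)

lemma sin_rp_pos {u : ℕ} (h0 : 0 < u) (hn : u < n) : 0 < sin (π * (u : ℝ) / n) := by
  have hn' := npos n
  apply sin_pos_of_pos_of_lt_pi
  · positivity
  · rw [div_lt_iff₀ hn']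
    have : (u:ℝ) < n := by exact_mod_cast hn
    nlinarith [pi_pos]

lemma sin_diff_pos {u v : ℕ} (h0u : 0 < u) (hv : v < n) (huv : u < v) :
    0 < sin (π * (v : ℝ) / n - π * (u : ℝ) / n) := by
  have h : π * (v : ℝ) / n - π * (u : ℝ) / n = π * ((v - u : ℕ) : ℝ) / n := by
    have : ((v - u : ℕ) : ℝ) = (v : ℝ) - u := by
      push_cast [Nat.le_of_lt huv]; ring
    rw [this]; ring
  rw [h]
  exact sin_rp_pos n (by omega) (by omega)

lemma sin_diff_neg {u v : ℕ} (h0v : 0 < v) (hu : u < n) (huv : v < u) :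
    sin (π * (v : ℝ) / n - π * (u : ℝ) / n) < 0 := by
  have h : π * (v : ℝ) / n - π * (u : ℝ) / n = -(π * (u : ℝ) / n - π * (v : ℝ) / n) := by ring
  rw [h, sin_neg, neg_lt, neg_zero]
  exact sin_diff_pos n h0v hu huv
lemma dt_segPt (A B C D : ℝ × ℝ) (s : ℝ) :
    dt A B (segPt C D s) = (1 - s) * dt A B C + s * dt A B D := by
  simp only [dt, segPt]; ring

lemma dt_segPt_self (A B : ℝ × ℝ) (t : ℝ) : dt A B (segPt A B t) = 0 := by
  simp only [dt, segPt]; ring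

lemma ns_segPt_lt (a b : ZMod n) (hab : a ≠ b) {t : ℝ} (h0 : 0 < t) (h1 : t < 1) :
    (segPt (vtx n a) (vtx n b) t).1 ^ 2 + (segPt (vtx n a) (vtx n b) t).2 ^ 2 < 1 := by
  have hn' := npos n
  set θa := 2 * π * (a.val : ℝ) / n
  set θb := 2 * π * (b.val : ℝ) / n
  have hip : cos θa * cos θb + sin θa * sin θb = cos (θa - θb) := (cos_sub θa θb).symm
  have hvne : a.val ≠ b.val := fun h => hab (ZMod.val_injective n h)
  have hlt : cos (θa - θb) < 1 := by
    have harg : θa - θb = 2 * π * ((a.val : ℝ) - b.val) / n := by ring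
    have hba : ((a.val : ℝ) - b.val) ≠ 0 := by
      intro h
      exact hvne (by exact_mod_cast sub_eq_zero.mp h)
    have hb1 : ((a.val : ℝ) - b.val) < n := by
      have := ZMod.val_lt a
      have : (a.val : ℝ) < n := by exact_mod_cast this
      have : (0:ℝ) ≤ b.val := by positivity
      linarith
    have hb2 : -(n:ℝ) < ((a.val : ℝ) - b.val) := by
      have := ZMod.val_lt b
      have : (b.val : ℝ) < n := by exact_mod_cast this
      have : (0:ℝ) ≤ (a.val:ℝ) := by positivity
      linarith
    refine lt_of_le_of_ne (cos_le_one _) ?_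
    intro h
    have h2 : θa - θb = 0 := by
      rw [harg] at h ⊢
      have hlo : -(2 * π) < 2 * π * ((a.val : ℝ) - b.val) / n := by
        rw [neg_lt, ← neg_div, ← mul_neg]
        rw [div_lt_iff₀ hn']
        nlinarith [pi_pos]
      have hhi : 2 * π * ((a.val : ℝ) - b.val) / n < 2 * π := by
        rw [div_lt_iff₀ hn']
        nlinarith [pi_pos]
      exact (cos_eq_one_iff_of_lt_of_lt hlo hhi).mp h
    rw [harg] at h2
    have := pi_pos
    rcases div_eq_zero_iff.mp h2 with h3 | h3
    · rcases mul_eq_zero.mp h3 with h4 | h4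
      · nlinarith
      · exact hba h4
    · linarith
  have h1a := sin_sq_add_cos_sq θa
  have h1b := sin_sq_add_cos_sq θb
  simp only [segPt, vtx]
  nlinarith [mul_pos h0 (by linarith : (0:ℝ) < 1 - t), sq_nonneg (cos θa - cos θb), sq_nonneg (sin θa - sin θb)]

lemma crossesAt_cases {a b c d : ZMod n} (hab : a ≠ b) {t : ℝ}
    (h : CrossesAt n a b c d t) : Crosses n a b c d ∨ s(a, b) = s(c, d) := by
  obtain ⟨ht0, ht1, s, hs0, hs1, hP⟩ := h
  have hcd : c ≠ d := by
    rintro rfl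
    have hseg : segPt (vtx n c) (vtx n c) s = vtx n c := by
      simp only [segPt, vtx, Prod.mk.injEq]
      constructor <;> ring
    rw [hseg] at hP
    have hlt := ns_segPt_lt n a b hab ht0 ht1
    rw [hP] at hlt
    simp only [vtx] at hlt
    nlinarith [sin_sq_add_cos_sq (2 * π * (c.val : ℝ) / n)]
  have key : (1 - s) * dt (vtx n a) (vtx n b) (vtx n c)
      + s * dt (vtx n a) (vtx n b) (vtx n d) = 0 := by
    have e1 := dt_segPt_self (vtx n a) (vtx n b) t
    rw [hP, dt_segPt] at e1
    exact e1
  set u := relPos n a b with hu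
  have hu0 : 0 < u := Nat.pos_of_ne_zero (fun h0 => hab ((rp_eq_zero_iff n a b).mp h0).symm)
  have hun : u < n := ZMod.val_lt _
  have hform : ∀ x : ZMod n, x ≠ a → x ≠ b →
      0 < relPos n a x ∧
      ((u < relPos n a x ∧ 0 < dt (vtx n a) (vtx n b) (vtx n x)) ∨
       (relPos n a x < u ∧ dt (vtx n a) (vtx n b) (vtx n x) < 0)) := by
    intro x hxa hxb
    have hv0 : 0 < relPos n a x := Nat.pos_of_ne_zero (fun h0 => hxa ((rp_eq_zero_iff n a x).mp h0))
    have hvn : relPos n a x < n := ZMod.val_lt _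
    have hvu : relPos n a x ≠ u := fun h => hxb (rp_inj n a (h : relPos n a x = relPos n a b))
    have hf := dt_vtx n a b x
    rw [← hu] at hf
    have hS1 := sin_rp_pos n hu0 hun
    have hS3 := sin_rp_pos n hv0 hvn
    refine ⟨hv0, ?_⟩
    rcases lt_or_gt_of_ne hvu with h | h
    · right
      refine ⟨h, ?_⟩
      have hS2 := sin_diff_neg n hv0 hun h
      rw [hf]
      nlinarith [mul_neg_of_neg_of_pos hS2 (mul_pos hS1 hS3)]
    · left
      refine ⟨h, ?_⟩
      have hS2 := sin_diff_pos n hu0 hvn h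
      rw [hf]
      nlinarith [mul_pos hS2 (mul_pos hS1 hS3)]
  have hdza : dt (vtx n a) (vtx n b) (vtx n a) = 0 := by simp only [dt]; ring
  have hdzb : dt (vtx n a) (vtx n b) (vtx n b) = 0 := by simp only [dt]; ring
  have hkey0 : ∀ X : ℝ, (1 - s) * X + s * 0 = 0 → X = 0 := by
    intro X h; have : (1:ℝ) - s ≠ 0 := by linarith
    have := mul_eq_zero.mp (by linarith : (1 - s) * X = 0)
    tauto
  have hkey0' : ∀ X : ℝ, (1 - s) * 0 + s * X = 0 → X = 0 := by
    intro X h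
    have := mul_eq_zero.mp (by linarith : s * X = 0)
    rcases this with h | h
    · exact absurd h (ne_of_gt hs0)
    · exact h
  by_cases hca : c = a
  · rw [hca, hdza] at key
    have hD0 := hkey0' _ key
    by_cases hdb : d = b
    · right; rw [hca, hdb]
    · exfalso
      have hda : d ≠ a := fun h => hcd (hca.trans h.symm)
      rcases (hform d hda hdb).2 with ⟨_, h⟩ | ⟨_, h⟩ <;> linarith
  · by_cases hcb : c = b
    · rw [hcb, hdzb] at key
      have hD0 := hkey0' _ key
      by_cases hda : d = a
      · right; rw [hcb, hda]; exact Sym2.eq_swap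
      · exfalso
        have hdb : d ≠ b := fun h => hcd (hcb.trans h.symm)
        rcases (hform d hda hdb).2 with ⟨_, h⟩ | ⟨_, h⟩ <;> linarith
    · by_cases hda : d = a
      · exfalso
        rw [hda, hdza] at key
        have hC0 := hkey0 _ key
        rcases (hform c hca hcb).2 with ⟨_, h⟩ | ⟨_, h⟩ <;> linarith
      · by_cases hdb : d = b
        · exfalso
          rw [hdb, hdzb] at key
          have hC0 := hkey0 _ key
          rcases (hform c hca hcb).2 with ⟨_, h⟩ | ⟨_, h⟩ <;> linarith
        · left
          obtain ⟨hvc0, hc'⟩ := hform c hca hcb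
          obtain ⟨hvd0, hd'⟩ := hform d hda hdb
          rcases hc' with ⟨hvc, hC⟩ | ⟨hvc, hC⟩ <;> rcases hd' with ⟨hvd, hD⟩ | ⟨hvd, hD⟩
          · exfalso; nlinarith
          · exact Or.inr ⟨hvd0, hvd, hvc⟩
          · exact Or.inl ⟨hvc0, hvc, hvd⟩
          · exfalso; nlinarith
end


section Main
variable (n : ℕ) [NeZero n] (ζ η : ZMod n) (D D₂ : Set (Sym2 (ZMod n)))

lemma noCrossSym2 {x y : ZMod n}
    (hx : relPos n η x ≤ relPos n η ζ) (hy : relPos n η y ≤ relPos n η ζ)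
    {c d : ZMod n} (h : s(c, d) = s(ζ, η)) : ¬ Crosses n x y c d := by
  rcases Sym2.eq_iff.mp h with ⟨rfl, rfl⟩ | ⟨rfl, rfl⟩
  · exact (noCross n c d x y hx hy).1
  · exact (noCross n d c x y hx hy).2

lemma tpath_iff (hD : IsDissection n D)
    (hsplit : D = insert s(ζ, η) D₂) (hdm : s(ζ, η) ∉ D₂)
    (hD₂ : IsDissectionOf n {ε : ZMod n | relPos n η ε ≤ relPos n η ζ} D₂)
    (a b : ZMod n) (ha : relPos n η a ≤ relPos n η ζ) (hb : relPos n η b ≤ relPos n η ζ)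
    (hab : a ≠ b) (l : List (ZMod n)) :
    IsTPathOn n {ε : ZMod n | relPos n η ε ≤ relPos n η ζ} D₂ a b l
      ↔ IsTPathOn n Set.univ D a b l := by
  set V₂ : Set (ZMod n) := {ε : ZMod n | relPos n η ε ≤ relPos n η ζ} with hV₂
  have hζV : ζ ∈ V₂ := by show relPos n η ζ ≤ relPos n η ζ; exact le_refl _
  have hηV : η ∈ V₂ := by
    show relPos n η η ≤ _
    simp [relPos]
  have hDend : ∀ c d : ZMod n, s(c, d) ∈ D → c ∈ V₂ ∧ d ∈ V₂ := by
    intro c d hcd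
    rw [hsplit, Set.mem_insert_iff] at hcd
    rcases hcd with h | h
    · rcases Sym2.eq_iff.mp h with ⟨rfl, rfl⟩ | ⟨rfl, rfl⟩
      · exact ⟨hζV, hηV⟩
      · exact ⟨hηV, hζV⟩
    · obtain ⟨h1, h2, _⟩ := hD₂.1 c d h
      exact ⟨h1, h2⟩
  have hD₂D : D₂ ⊆ D := by rw [hsplit]; exact Set.subset_insert _ _
  constructor
  · rintro ⟨h1, h2, h3, h4, h5, h6, h7, h8, h9⟩
    refine ⟨h1, h2, h3, fun i _ => Set.mem_univ _, h5, h6, ?_, ?_, h9⟩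
    · intro i hi c d hcd
      rw [hsplit, Set.mem_insert_iff] at hcd
      rcases hcd with h | h
      · exact noCrossSym2 n ζ η (h4 i (by omega)) (h4 (i+1) hi) h
      · exact h7 i hi c d h
    · intro i hoi hi
      exact hD₂D (h8 i hoi hi)
  · rintro ⟨h1, h2, h3, h4, h5, h6, h7, h8, h9⟩
    obtain ⟨tf, htc, hmono⟩ := h9
    have habD : s(a, b) = s(ζ, η) → s(a, b) ∈ D := by
      intro h; rw [hsplit, h]; exact Set.mem_insert _ _
    have h8' : ∀ i, Odd i → i + 1 < l.length → s(l.getD i 0, l.getD (i + 1) 0) ∈ D₂ := by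
      intro i hoi hi
      have hmem := h8 i hoi hi
      rw [hsplit, Set.mem_insert_iff] at hmem
      rcases hmem with heq | hmem
      · -- the step is the ear diagonal {ζ,η}
        exfalso
        have hca := crossesAt_cases n hab (htc i hoi hi)
        rcases hca with hcross | hsym
        · exact noCrossSym2 n ζ η ha hb heq hcross
        · -- s(a,b) = s(step i) = s(ζ,η)
          have habζη : s(a, b) = s(ζ, η) := hsym.trans heq
          have hi1 : 1 + 1 < l.length := by
            have : 1 ≤ i := hoi.pos
            omega
          have hstep1 := h8 1 odd_one hi1
          rcases crossesAt_cases n hab (htc 1 odd_one hi1) with hcross1 | hsym1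
          · exact hD.2 a b _ _ (habD habζη) hstep1 hcross1
          · rcases Nat.lt_or_ge 1 i with hlt | hge
            · exact h6 1 i hlt hi (hsym1.symm.trans hsym)
            · -- i = 1
              have hieq : i = 1 := by
                have : 1 ≤ i := hoi.pos
                omega
              subst hieq
              have hl1 : l.getD 1 0 = b := by
                rcases Sym2.eq_iff.mp hsym1.symm with ⟨he1, _⟩ | ⟨he1, _⟩
                · exact absurd (h2.trans he1.symm) (h5 0 (by omega))
                · exact he1
              have hl2 : l.getD 2 0 = a := by
                rcases Sym2.eq_iff.mp hsym1.symm with ⟨he1, _⟩ | ⟨_, he2⟩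
                · exact absurd (h2.trans he1.symm) (h5 0 (by omega))
                · exact he2
              have hne := h6 0 1 (by omega) hi1
              apply hne
              rw [h2, hl1, hl2]
              exact Sym2.eq_swap
      · exact hmem
    have h4' : ∀ i, i < l.length → l.getD i 0 ∈ V₂ := by
      intro i hi
      by_cases hi0 : i = 0
      · rw [hi0, h2]; exact ha
      · by_cases hil : i = l.length - 1
        · rw [hil, h3]; exact hb
        · have hi1 : i + 1 < l.length := by omega
          have hipos : 0 < i := Nat.pos_of_ne_zero hi0
          rcases Nat.even_or_odd i with he | ho
          · have hodd : Odd (i - 1) := by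
              rcases he with ⟨k, hk⟩
              exact ⟨k - 1, by omega⟩
            have hstep := h8 (i - 1) hodd (by omega)
            have e : i - 1 + 1 = i := by omega
            rw [e] at hstep
            exact (hDend _ _ hstep).2
          · exact (hDend _ _ (h8 i ho hi1)).1
    refine ⟨h1, h2, h3, h4', h5, h6, ?_, h8', ⟨tf, htc, hmono⟩⟩
    · intro i hi c d hcd
      exact h7 i hi c d (hD₂D hcd)

end Main
end EarAux

/-- **Ear setup.**  `D = {d} ⊔ D₂` is a dissection of the `n`-gon, where `d = {ζ,η}`
divides the polygon into subpolygons `P₁` (vertex set `V₁ = {ε : ζ ≤ ε ≤ η}`, an ear)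
and `P₂` (vertex set `V₂ = {ε : η ≤ ε ≤ ζ}`), and `D₂` is a dissection of `P₂`.
If `f : diag(P) → K` satisfies the T-path formula with respect to `D`, then its
restriction to `diag(P₂)` satisfies the T-path formula with respect to `D₂`. -/


theorem ear_tPathFormula_restrict
    (n : ℕ) [NeZero n] (hn : 3 ≤ n) {K : Type*} [PaperSemifield K]
    (ζ η : ZMod n) (hζη : IsInternalDiag n ζ η)
    (D D₂ : Set (Sym2 (ZMod n)))
    (hD : IsDissection n D)
    (hsplit : D = insert s(ζ, η) D₂) (hdm : s(ζ, η) ∉ D₂)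
    (hD₂ : IsDissectionOf n {ε : ZMod n | relPos n η ε ≤ relPos n η ζ} D₂)
    (f : ZMod n → ZMod n → K) (hf : SymmOn n Set.univ f)
    (hT : SatisfiesTPathFormula n D f) :
    SatisfiesTPathFormulaOn n {ε : ZMod n | relPos n η ε ≤ relPos n η ζ} D₂ f := by
  intro a b ha hb hab
  have key : TPathFinsetOn n {ε : ZMod n | relPos n η ε ≤ relPos n η ζ} D₂ a b
      = TPathFinsetOn n Set.univ D a b := by
    ext l
    simp only [TPathFinsetOn, Finset.mem_filter]
    exact and_congr_right fun _ =>
      tpath_iff n ζ η D D₂ hD hsplit hdm hD₂ a b ha hb hab l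
  rw [key]
  exact hT a b (Set.mem_univ a) (Set.mem_univ b) hab
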